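/- Fix z ∈ [1, e] and x ≥ 0, and define h̃_z(x) = min over y ∈ [1,z] of y·(x - ln ln y). Then h̃_z(x) = exp(1/h⁻¹(x))·h⁻¹(x) if x ≥ h(1/ln z), and h̃_z(x) = z·(x - ln ln z) otherwise. -/

import Mathlib

/-- `u ↦ u - log u` is strictly increasing on `[1, ∞)`. -/
lemma my_hmono {a b : ℝ} (ha : 1 ≤ a) (hab : a < b) :
    a - Real.log a < b - Real.log b := by
  have h0 : (0:ℝ) < a := by linarith
  have hba : (1:ℝ) < b / a := (one_lt_div h0).mpr hab
  have h1 : Real.log (b / a) < b / a - 1 :=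
    Real.log_lt_sub_one_of_pos (by positivity) hba.ne'
  rw [Real.log_div (by linarith) h0.ne'] at h1
  have h2 : b / a ≤ b - a + 1 := by
    rw [div_le_iff₀ h0]; nlinarith
  linarith

/-- Derivative of `y ↦ y (x - log log y)` at `w > 1`. -/
lemma my_deriv (x w : ℝ) (hw : 1 < w) :
    HasDerivAt (fun y => y * (x - Real.log (Real.log y)))
      (x - Real.log (Real.log w) - (Real.log w)⁻¹) w := by
  have hw0 : w ≠ 0 := by positivity
  have hlw : Real.log w ≠ 0 := (Real.log_pos hw).ne'
  have hl : HasDerivAt (fun y => Real.log (Real.log y)) ((Real.log w)⁻¹ * w⁻¹) w :=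
    (Real.hasDerivAt_log hlw).comp w (Real.hasDerivAt_log hw0)
  have hg : HasDerivAt (fun y => x - Real.log (Real.log y)) (-((Real.log w)⁻¹ * w⁻¹)) w :=
    hl.const_sub x
  have := (hasDerivAt_id w).mul hg
  refine HasDerivAt.congr_deriv this ?_
  simp only [id_eq, one_mul]
  rw [mul_comm ((Real.log w)⁻¹) w⁻¹, mul_neg, ← mul_assoc, mul_inv_cancel₀ hw0]
  ring

lemma my_anti (x a b : ℝ) (ha : 1 < a) (hab : a < b)
    (hd : ∀ w ∈ Set.Ioo a b, x - Real.log (Real.log w) - (Real.log w)⁻¹ < 0) :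
    b * (x - Real.log (Real.log b)) < a * (x - Real.log (Real.log a)) := by
  have h := strictAntiOn_of_deriv_neg (convex_Icc a b)
    (fun w hw => (my_deriv x w (lt_of_lt_of_le ha hw.1)).continuousAt.continuousWithinAt)
    (fun w hw => by
      rw [interior_Icc] at hw
      rw [(my_deriv x w (lt_trans ha hw.1)).deriv]
      exact hd w hw)
  exact h (Set.left_mem_Icc.mpr hab.le) (Set.right_mem_Icc.mpr hab.le) hab

lemma my_mono (x a b : ℝ) (ha : 1 < a) (hab : a < b)
    (hd : ∀ w ∈ Set.Ioo a b, 0 < x - Real.log (Real.log w) - (Real.log w)⁻¹) :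
    a * (x - Real.log (Real.log a)) < b * (x - Real.log (Real.log b)) := by
  have h := strictMonoOn_of_deriv_pos (convex_Icc a b)
    (fun w hw => (my_deriv x w (lt_of_lt_of_le ha hw.1)).continuousAt.continuousWithinAt)
    (fun w hw => by
      rw [interior_Icc] at hw
      rw [(my_deriv x w (lt_trans ha hw.1)).deriv]
      exact hd w hw)
  exact h (Set.left_mem_Icc.mpr hab.le) (Set.right_mem_Icc.mpr hab.le) hab

theorem stmt2 (z x : ℝ) (hz : z ∈ Set.Ioc (1:ℝ) (Real.exp 1)) (hx : 0 ≤ x)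
    (h hinv : ℝ → ℝ) (hh : ∀ u, h u = u - Real.log u)
    (hinv1 : ∀ y ≥ (1:ℝ), 1 ≤ hinv y ∧ h (hinv y) = y) :
    IsLeast ((fun y => y * (x - Real.log (Real.log y))) '' Set.Ioc 1 z)
      (if h (1/Real.log z) ≤ x then Real.exp (1/hinv x) * hinv x
       else z * (x - Real.log (Real.log z))) := by
  obtain ⟨hz1, hze⟩ := hz
  have hlz : 0 < Real.log z := Real.log_pos hz1
  have hlz1 : Real.log z ≤ 1 := by
    calc Real.log z ≤ Real.log (Real.exp 1) := Real.log_le_log (by positivity) hze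
    _ = 1 := Real.log_exp 1
  have hilz : 1 ≤ 1 / Real.log z := by
    rw [le_div_iff₀ hlz]; linarith
  split_ifs with hcase
  · -- x ≥ h(1/log z): minimum at y* = exp(1/hinv x)
    rw [hh] at hcase
    have hx1 : 1 ≤ x := by
      have : Real.log (1 / Real.log z) ≤ 1 / Real.log z - 1 := by
        rcases eq_or_lt_of_le hilz with he | hl
        · rw [← he]; simp
        · exact (Real.log_lt_sub_one_of_pos (by positivity) hl.ne').le
      linarith
    obtain ⟨ht1, htx⟩ := hinv1 x hx1
    rw [hh] at htx
    set t := hinv x with htdef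
    have ht0 : 0 < t := by linarith
    -- 1/log z ≤ t
    have htz : 1 / Real.log z ≤ t := by
      by_contra hc
      push_neg at hc
      have := my_hmono ht1 hc
      linarith
    -- y* ∈ (1, z]
    have hys1 : 1 < Real.exp (1 / t) := Real.one_lt_exp_iff.mpr (by positivity)
    have hysz : Real.exp (1 / t) ≤ z := by
      rw [← Real.exp_log (by positivity : (0:ℝ) < z)]
      apply Real.exp_le_exp.mpr
      rw [div_le_iff₀ ht0]
      rw [div_le_iff₀ hlz] at htz
      nlinarith
    have hlogys : Real.log (Real.exp (1 / t)) = 1 / t := Real.log_exp _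
    have hval : Real.exp (1 / t) * (x - Real.log (Real.log (Real.exp (1 / t))))
        = Real.exp (1 / t) * t := by
      rw [hlogys, one_div, Real.log_inv, sub_neg_eq_add,
        show x + Real.log t = t by linarith]
    constructor
    · exact ⟨Real.exp (1 / t), ⟨hys1, hysz⟩, hval⟩
    · rintro v ⟨y, ⟨hy1, hyz⟩, rfl⟩
      show _ ≤ y * (x - Real.log (Real.log y))
      rcases lt_trichotomy y (Real.exp (1 / t)) with hlt | heq | hgt
      · -- F y* < F y : F antitone on [y, y*]
        have := my_anti x y (Real.exp (1 / t)) hy1 hlt (fun w hw => by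
          have hw1 : 1 < w := lt_trans hy1 hw.1
          have hlw : 0 < Real.log w := Real.log_pos hw1
          have hlwt : Real.log w < 1 / t := by
            have := Real.log_lt_log (by positivity) hw.2
            rwa [hlogys] at this
          have hu : t < (Real.log w)⁻¹ := by
            rw [lt_inv_comm₀ ht0 hlw]
            rwa [← one_div]
          have := my_hmono ht1 hu
          have hli : Real.log ((Real.log w)⁻¹) = -Real.log (Real.log w) :=
            Real.log_inv _
          linarith)
        rw [hval] at this
        linarith
      · rw [heq]
        exact le_of_eq hval.symm
      · -- F y* < F y : F monotone on [y*, y]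
        have := my_mono x (Real.exp (1 / t)) y hys1 hgt (fun w hw => by
          have hw1 : 1 < w := lt_trans hys1 hw.1
          have hlw : 0 < Real.log w := Real.log_pos hw1
          have hlwe : Real.log w < 1 := by
            have : Real.log w < Real.log z := by
              rcases eq_or_lt_of_le hyz with he | hl
              · exact Real.log_lt_log (by positivity) (he ▸ hw.2)
              · exact Real.log_lt_log (by positivity) (lt_trans hw.2 hl)
            linarith
          have hu1 : 1 < (Real.log w)⁻¹ := (one_lt_inv₀ hlw).mpr hlwe
          have hut : (Real.log w)⁻¹ < t := by
            have h1t : 1 / t < Real.log w := by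
              have := Real.log_lt_log (Real.exp_pos _) hw.1
              rwa [hlogys] at this
            rw [inv_lt_comm₀ hlw ht0]
            rwa [← one_div]
          have := my_hmono hu1.le hut
          have hli : Real.log ((Real.log w)⁻¹) = -Real.log (Real.log w) :=
            Real.log_inv _
          linarith)
        rw [hval] at this
        linarith
  · -- x < h(1/log z): minimum at y = z
    rw [hh] at hcase
    push_neg at hcase
    constructor
    · exact ⟨z, ⟨hz1, le_refl z⟩, rfl⟩
    · rintro v ⟨y, ⟨hy1, hyz⟩, rfl⟩
      show _ ≤ y * (x - Real.log (Real.log y))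
      rcases eq_or_lt_of_le hyz with he | hlt
      · rw [he]
      · have := my_anti x y z hy1 hlt (fun w hw => by
          have hw1 : 1 < w := lt_trans hy1 hw.1
          have hlw : 0 < Real.log w := Real.log_pos hw1
          have hlwz : Real.log w < Real.log z := Real.log_lt_log (by positivity) hw.2
          have hu : 1 / Real.log z < (Real.log w)⁻¹ := by
            rw [one_div, inv_lt_inv₀ hlz hlw]
            exact hlwz
          have := my_hmono hilz hu
          have hli : Real.log ((Real.log w)⁻¹) = -Real.log (Real.log w) :=
            Real.log_inv _
          linarith)
        linarith
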